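/- Let γ ∈ [0,1] and let (b₀, b₁) be a probability vector, i.e. b₀, b₁ ≥ 0 and b₀ + b₁ = 1. Then max{ b₀ g₀ + b₁ g₁ : (g₀, g₁) ∈ ℝ², |g₀| + |g₁| ≤ 1, (1−γ)g₀ + γ g₁ ≤ 0 } = |b₁ − γ|, and the maximum is attained at (g₀, g₁) = (−γ, 1−γ) when b₁ > γ and at (g₀, g₁) = (γ, −(1−γ)) otherwise. In other words, for binary outcomes and a mean forecast γ, the rational gambler restricted to the ℓ1 unit ball of available gambles achieves expected value exactly |E_b[Y] − γ|, playing ±(y − γ). -/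
import Mathlib


/-- For binary outcomes and a mean forecast `γ`, the rational gambler restricted to the
ℓ1 unit ball of available gambles achieves expected value exactly `|b₁ − γ|`; the maximum
is attained at `(−γ, 1−γ)` when `b₁ > γ` and at `(γ, −(1−γ))` otherwise. -/
theorem stmt10 (γ : ℝ) (hγ : γ ∈ Set.Icc (0 : ℝ) 1) (b₀ b₁ : ℝ)
    (hb₀ : 0 ≤ b₀) (hb₁ : 0 ≤ b₁) (hsum : b₀ + b₁ = 1) :
    IsGreatest {x : ℝ | ∃ g₀ g₁ : ℝ, |g₀| + |g₁| ≤ 1 ∧ (1 - γ) * g₀ + γ * g₁ ≤ 0 ∧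
        x = b₀ * g₀ + b₁ * g₁} |b₁ - γ| ∧
    (γ < b₁ → b₀ * (-γ) + b₁ * (1 - γ) = |b₁ - γ|) ∧
    (b₁ ≤ γ → b₀ * γ + b₁ * (-(1 - γ)) = |b₁ - γ|) := by
  obtain ⟨hγ0, hγ1⟩ := hγ
  have hb0 : b₀ = 1 - b₁ := by linarith
  refine ⟨⟨?_, ?_⟩, ?_, ?_⟩
  · rcases le_or_gt b₁ γ with h | h
    · refine ⟨γ, -(1 - γ), ?_, ?_, ?_⟩
      · rw [abs_of_nonneg hγ0, abs_neg, abs_of_nonneg (by linarith)]; linarith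
      · nlinarith
      · rw [abs_of_nonpos (by linarith)]; nlinarith
    · refine ⟨-γ, 1 - γ, ?_, ?_, ?_⟩
      · rw [abs_neg, abs_of_nonneg hγ0, abs_of_nonneg (by linarith)]; linarith
      · nlinarith
      · rw [abs_of_pos (by linarith)]; nlinarith
  · rintro x ⟨g₀, g₁, hnorm, havail, rfl⟩
    have key : b₀ * g₀ + b₁ * g₁ - (b₁ - γ) * (g₁ - g₀) = (1 - γ) * g₀ + γ * g₁ := by
      rw [hb0]; ring
    have h1 : b₀ * g₀ + b₁ * g₁ ≤ (b₁ - γ) * (g₁ - g₀) := by linarith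
    have h2 : (b₁ - γ) * (g₁ - g₀) ≤ |b₁ - γ| * |g₁ - g₀| := by
      calc (b₁ - γ) * (g₁ - g₀) ≤ |(b₁ - γ) * (g₁ - g₀)| := le_abs_self _
        _ = |b₁ - γ| * |g₁ - g₀| := abs_mul _ _
    have h3 : |g₁ - g₀| ≤ 1 := by
      calc |g₁ - g₀| ≤ |g₁| + |g₀| := abs_sub _ _
        _ ≤ 1 := by linarith
    nlinarith [abs_nonneg (b₁ - γ), h1, h2, h3]
  · intro h; rw [abs_of_pos (by linarith)]; nlinarith
  · intro h; rw [abs_of_nonpos (by linarith)]; nlinarith
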